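/- For every 𝓔 with 0 < 𝓔 < 1, the period integral T(𝓔) = 4𝓔·∫₀^{arccos 𝓔} dg / (cos²g · √(1 − 𝓔²/cos²g)) equals 2π. Equivalently, under the change of variable w = (𝓔/√(1−𝓔²))·tan g, the integral transforms into 4·∫₀¹ dw/√(1−w²) = 2π. -/

import Mathlib

open Real

lemma ftc_aux {f f' : ℝ → ℝ} {a b : ℝ} (hab : a ≤ b) (hcont : ContinuousOn f (Set.Icc a b))
    (hderiv : ∀ x ∈ Set.Ioo a b, HasDerivAt f (f' x) x)
    (hpos : ∀ x ∈ Set.Ioo a b, 0 ≤ f' x) :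
    ∫ y in a..b, f' y = f b - f a := by
  apply intervalIntegral.integral_eq_sub_of_hasDeriv_right_of_le hab hcont
    (fun x hx => (hderiv x hx).hasDerivWithinAt)
  apply intervalIntegral.intervalIntegrable_deriv_of_nonneg
  · rwa [Set.uIcc_of_le hab]
  · rwa [min_eq_left hab, max_eq_right hab]
  · rwa [min_eq_left hab, max_eq_right hab]

/-- The period integral T(𝓔) = 4𝓔·∫₀^{arccos 𝓔} dg/(cos²g·√(1 − 𝓔²/cos²g)) equals 2π
for every 0 < 𝓔 < 1; equivalently, after the change of variable
w = (𝓔/√(1−𝓔²))·tan g, it becomes 4·∫₀¹ dw/√(1−w²) = 2π. -/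
theorem period_integral_eq_two_pi (E : ℝ) (h0 : 0 < E) (h1 : E < 1) :
    (4 * E * ∫ g in (0:ℝ)..(Real.arccos E),
        1 / ((Real.cos g) ^ 2 * Real.sqrt (1 - E ^ 2 / (Real.cos g) ^ 2)) = 2 * π)
    ∧ (4 * ∫ w in (0:ℝ)..1, 1 / Real.sqrt (1 - w ^ 2) = 2 * π) := by
  constructor
  · -- first part
    set a := Real.arccos E with ha
    have ha0 : 0 < a := Real.arccos_pos.mpr h1
    have hapi : a < π / 2 := Real.arccos_lt_pi_div_two.mpr h0
    have h1E2 : (0:ℝ) < 1 - E ^ 2 := by nlinarith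
    have hsq : Real.sqrt (1 - E ^ 2) ^ 2 = 1 - E ^ 2 := Real.sq_sqrt h1E2.le
    have hsqpos : 0 < Real.sqrt (1 - E ^ 2) := Real.sqrt_pos.mpr h1E2
    set c := E / Real.sqrt (1 - E ^ 2) with hc
    set f : ℝ → ℝ := fun g => Real.arcsin (c * Real.tan g) with hf
    have hcosa : Real.cos a = E := Real.cos_arccos (by linarith) h1.le
    -- basic facts on Ioo 0 a
    have hcos_pos : ∀ g ∈ Set.Icc (0:ℝ) a, 0 < Real.cos g := fun g hg =>
      Real.cos_pos_of_mem_Ioo ⟨by linarith [hg.1, Real.pi_div_two_pos], by linarith [hg.2]⟩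
    have hcos_gt : ∀ g ∈ Set.Ioo (0:ℝ) a, E < Real.cos g := by
      intro g hg
      have hpi2 : π / 2 < π := by linarith [Real.pi_pos]
      have := Real.strictAntiOn_cos
        (Set.mem_Icc.mpr ⟨hg.1.le, by linarith [hg.2]⟩)
        (Set.mem_Icc.mpr ⟨ha0.le, by linarith⟩) hg.2
      rwa [hcosa] at this
    have key : ∀ g ∈ Set.Ioo (0:ℝ) a, HasDerivAt f
        (E * (1 / ((Real.cos g) ^ 2 * Real.sqrt (1 - E ^ 2 / (Real.cos g) ^ 2)))) g := by
      intro g hg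
      have hcg : 0 < Real.cos g := hcos_pos g ⟨hg.1.le, hg.2.le⟩
      have hEcg : E < Real.cos g := hcos_gt g hg
      have hsin_nonneg : 0 ≤ Real.sin g := Real.sin_nonneg_of_nonneg_of_le_pi hg.1.le
        (by linarith [hg.2, hapi, Real.pi_pos])
      have hsin2 : Real.sin g ^ 2 = 1 - Real.cos g ^ 2 := by
        have := Real.sin_sq_add_cos_sq g; linarith
      have hsinlt : Real.sin g < Real.sqrt (1 - E ^ 2) := by
        have h2 : Real.sin g ^ 2 < 1 - E ^ 2 := by nlinarith
        nlinarith [hsqpos]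
      have hlem : E * Real.sin g < Real.sqrt (1 - E ^ 2) * Real.cos g := by
        calc E * Real.sin g < E * Real.sqrt (1 - E ^ 2) := by nlinarith
          _ ≤ Real.sqrt (1 - E ^ 2) * Real.cos g := by nlinarith
      have hlt1 : c * Real.tan g < 1 := by
        rw [Real.tan_eq_sin_div_cos, hc]
        rw [div_mul_div_comm, div_lt_one (by positivity)]
        exact hlem
      have hnonneg : 0 ≤ c * Real.tan g := by
        rw [Real.tan_eq_sin_div_cos]
        have : 0 ≤ c := by positivity
        positivity
      have htan : HasDerivAt (fun g => c * Real.tan g) (c * (1 / Real.cos g ^ 2)) g :=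
        (Real.hasDerivAt_tan hcg.ne').const_mul c
      have harcsin := (Real.hasDerivAt_arcsin (by linarith) hlt1.ne).comp g htan
      have hrad : 0 < 1 - E ^ 2 / Real.cos g ^ 2 := by
        rw [sub_pos, div_lt_one (by positivity)]; nlinarith
      have hradsqrt : 0 < Real.sqrt (1 - E ^ 2 / Real.cos g ^ 2) := Real.sqrt_pos.mpr hrad
      have heq : 1 - (c * Real.tan g) ^ 2 = (1 - E ^ 2 / Real.cos g ^ 2) / (1 - E ^ 2) := by
        rw [Real.tan_eq_sin_div_cos, hc]
        field_simp
        linear_combination (Real.cos g ^ 2 * (1 - E ^ 2) * Real.cos g ^ 2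
            - (Real.cos g ^ 2 - E ^ 2) * Real.cos g ^ 2 + E ^ 2 * (1 - Real.cos g ^ 2) ^ 2) * hsq
          - (E ^ 2 * Real.cos g ^ 2 * (1 - E ^ 2) + E ^ 2 * (1 - E ^ 2) * (1 - Real.cos g ^ 2)) * hsin2
      have hsqrt_eq : Real.sqrt (1 - (c * Real.tan g) ^ 2)
          = Real.sqrt (1 - E ^ 2 / Real.cos g ^ 2) / Real.sqrt (1 - E ^ 2) := by
        rw [heq, Real.sqrt_div hrad.le]
      have habs : ∀ A B C D : ℝ, A ≠ 0 → B ≠ 0 → C ≠ 0 →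
          D * (1 / (C * A)) = 1 / (A / B) * (D / B * (1 / C)) := by
        intro A B C D hA hB hC
        field_simp
      refine harcsin.congr_deriv ?_
      symm
      rw [hsqrt_eq, hc]
      exact habs _ _ _ _ hradsqrt.ne' hsqpos.ne' (by positivity)
    have hcont : ContinuousOn f (Set.Icc 0 a) := by
      apply Real.continuous_arcsin.comp_continuousOn
      exact continuousOn_const.mul (Real.continuousOn_tan.mono
        (fun g hg => (hcos_pos g hg).ne'))
    have hnonneg : ∀ g ∈ Set.Ioo (0:ℝ) a,
        0 ≤ E * (1 / ((Real.cos g) ^ 2 * Real.sqrt (1 - E ^ 2 / (Real.cos g) ^ 2))) := by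
      intro g hg
      have h1 : 0 ≤ Real.sqrt (1 - E ^ 2 / (Real.cos g) ^ 2) := Real.sqrt_nonneg _
      have h2 : 0 < Real.cos g := hcos_pos g ⟨hg.1.le, hg.2.le⟩
      positivity
    have hint := ftc_aux ha0.le hcont key hnonneg
    have hf0 : f 0 = 0 := by simp [hf]
    have hfa : f a = π / 2 := by
      have : c * Real.tan a = 1 := by
        rw [ha, Real.tan_arccos, hc]
        field_simp
      rw [hf]; simp only [this, Real.arcsin_one]
    rw [hf0, hfa, sub_zero] at hint
    have hmul : ∫ g in (0:ℝ)..a,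
        E * (1 / ((Real.cos g) ^ 2 * Real.sqrt (1 - E ^ 2 / (Real.cos g) ^ 2)))
        = E * ∫ g in (0:ℝ)..a,
        1 / ((Real.cos g) ^ 2 * Real.sqrt (1 - E ^ 2 / (Real.cos g) ^ 2)) :=
      intervalIntegral.integral_const_mul _ _
    rw [hmul] at hint
    rw [mul_assoc, hint]; ring
  · -- second part
    have key : ∀ w ∈ Set.Ioo (0:ℝ) 1, HasDerivAt Real.arcsin (1 / Real.sqrt (1 - w ^ 2)) w :=
      fun w hw => Real.hasDerivAt_arcsin (by linarith [hw.1]) hw.2.ne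
    have hint := ftc_aux zero_le_one Real.continuous_arcsin.continuousOn key
      (fun w _ => by positivity)
    rw [Real.arcsin_one, Real.arcsin_zero, sub_zero] at hint
    rw [hint]; ring
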